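/- Let a ∈ ℂ, t ∈ ℝ, u ∈ ℂ with |u| = 1, and λ > 0. For (z,ζ,w) ∈ ℂ³ set δ := 1 − 2i·conj(a)·z − (t + i|a|²)·w + i·conj(a)²·(wζ + iz²), and define ψ(z,ζ,w) := ( λu·(z + aw − conj(a)·(wζ + iz²))/δ , u²·(ζ − 2iaz − ia²w − (t − i|a|²)·(wζ + iz²))/δ , λ²·w/δ ) (components in the order (z̃, ζ̃, w̃)). Then ψ(0,0,0) = (0,0,0), and whenever δ ≠ 0 and (z,ζ,w) satisfies the defining equation (1−|ζ|²)·Im w = |z|² + Re(z²·conj(ζ)), the image (z̃,ζ̃,w̃) satisfies (1−|ζ̃|²)·Im w̃ = |z̃|² + Re(z̃²·conj(ζ̃)). (These ψ constitute the 5-dimensional stability group Aut(𝒳,0).) -/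

import Mathlib

set_option maxRecDepth 100000 in
set_option maxHeartbeats 2000000 in
private lemma main_ident (z zb e eb w wb A Ab T D Db Nz Nzb Ne Neb : ℂ)
    (hD : D = 1 - 2*Complex.I*Ab*z - (T + Complex.I*(A*Ab))*w
        + Complex.I*Ab^2*(w*e + Complex.I*z^2))
    (hDb : Db = 1 + 2*Complex.I*A*zb - (T - Complex.I*(A*Ab))*wb
        - Complex.I*A^2*(wb*eb - Complex.I*zb^2))
    (hNz : Nz = z + A*w - Ab*(w*e + Complex.I*z^2))
    (hNzb : Nzb = zb + Ab*wb - A*(wb*eb - Complex.I*zb^2))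
    (hNe : Ne = e - 2*Complex.I*A*z - Complex.I*A^2*w
        - (T - Complex.I*(A*Ab))*(w*e + Complex.I*z^2))
    (hNeb : Neb = eb + 2*Complex.I*Ab*zb + Complex.I*Ab^2*wb
        - (T + Complex.I*(A*Ab))*(wb*eb - Complex.I*zb^2))
    (H : (1 - e*eb)*(w - wb) = 2*Complex.I*(z*zb) + Complex.I*(z^2*eb + zb^2*e)) :
    (D*Db - Ne*Neb)*(w*Db - wb*D)
      = 2*Complex.I*(Nz*Nzb)*(D*Db) + Complex.I*(Nz^2*Neb*Db + Nzb^2*Ne*D) := by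
  subst hD hDb hNz hNzb hNe hNeb
  linear_combination ((2)*Complex.I*zb*A + (-2)*Complex.I*z*Ab + (2)*Complex.I*z*zb^2*A^2*Ab + (-2)*Complex.I*z^2*zb*A*Ab^2 + (1)*Complex.I*wb*A*Ab + (-1)*Complex.I*wb*A^2*eb + (2)*Complex.I*wb*z*Ab*T + (-1)*Complex.I*wb*z^2*A*Ab^3 + (1)*Complex.I*wb*z^2*A^2*Ab^2*eb + (1)*Complex.I*w*Ab^2*e + (-1)*Complex.I*w*A*Ab + (-2)*Complex.I*w*zb*A*T + (-1)*Complex.I*w*zb^2*A^2*Ab^2*e + (1)*Complex.I*w*zb^2*A^3*Ab + (-1)*Complex.I*w*wb*Ab^2*T*e + (1)*Complex.I*w*wb*A^2*T*eb + (-1)*Complex.I^2 + (1)*Complex.I^2*zb^2*A^2 + (-4)*Complex.I^2*z*zb*A*Ab + (1)*Complex.I^2*z^2*Ab^2 + (-1)*Complex.I^2*z^2*zb^2*A^2*Ab^2 + (1)*Complex.I^2*wb*T + (-2)*Complex.I^2*wb*z*A*Ab^2 + (2)*Complex.I^2*wb*z*A^2*Ab*eb + (-1)*Complex.I^2*wb*z^2*Ab^2*T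 + (1)*Complex.I^2*w*T + (2)*Complex.I^2*w*zb*A*Ab^2*e + (-2)*Complex.I^2*w*zb*A^2*Ab + (-1)*Complex.I^2*w*zb^2*A^2*T + (-1)*Complex.I^2*w*wb*T^2 + (1)*Complex.I^2*w*wb*A*Ab^3*e + (-1)*Complex.I^2*w*wb*A^2*Ab^2 + (-1)*Complex.I^2*w*wb*A^2*Ab^2*e*eb + (1)*Complex.I^2*w*wb*A^3*Ab*eb) * H + ((-1)*wb + (1)*wb*e*eb + (1)*wb^2*T + (-1)*wb^2*T*e*eb + (1)*w + (-1)*w*e*eb + (-1)*w*wb^2*T^2 + (1)*w*wb^2*T^2*e*eb + (-1)*w^2*T + (1)*w^2*T*e*eb + (1)*w^2*wb*T^2 + (-1)*w^2*wb*T^2*e*eb + (-1)*Complex.I*zb^2*e + (-2)*Complex.I*z*zb + (-1)*Complex.I*z^2*eb + (1)*Complex.I*wb*zb^2*T*e + (2)*Complex.I*wb*z*zb*T + (2)*Complex.I*wb*z*zb^2*A^2*Ab + (-2)*Complex.I*wb*z*zb^2*A^2*Ab*e*eb + (1)*Complex.I*wb*z^2*T*eb + (-2)*Complex.I*wb*z^2*zb*A*Ab^2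 + (2)*Complex.I*wb*z^2*zb*A*Ab^2*e*eb + (-1)*Complex.I*wb^2*z^2*A*Ab^3 + (1)*Complex.I*wb^2*z^2*A*Ab^3*e*eb + (1)*Complex.I*wb^2*z^2*A^2*Ab^2*eb + (-1)*Complex.I*wb^2*z^2*A^2*Ab^2*e*eb^2 + (1)*Complex.I*w*zb^2*T*e + (2)*Complex.I*w*z*zb*T + (-2)*Complex.I*w*z*zb^2*A^2*Ab + (2)*Complex.I*w*z*zb^2*A^2*Ab*e*eb + (1)*Complex.I*w*z^2*T*eb + (2)*Complex.I*w*z^2*zb*A*Ab^2 + (-2)*Complex.I*w*z^2*zb*A*Ab^2*e*eb + (-1)*Complex.I*w*wb*zb^2*T^2*e + (-1)*Complex.I*w*wb*zb^2*A^2*Ab^2*e + (1)*Complex.I*w*wb*zb^2*A^2*Ab^2*e^2*eb + (1)*Complex.I*w*wb*zb^2*A^3*Ab + (-1)*Complex.I*w*wb*zb^2*A^3*Ab*e*eb + (-2)*Complex.I*w*wb*z*zb*T^2 + (-1)*Complex.I*w*wb*z^2*T^2*eb + (1)*Complex.I*w*wb*z^2*A*Ab^3 + (-1)*Complex.I*w*wb*z^2*A*Ab^3*e*eb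 + (-1)*Complex.I*w*wb*z^2*A^2*Ab^2*eb + (1)*Complex.I*w*wb*z^2*A^2*Ab^2*e*eb^2 + (1)*Complex.I*w^2*zb^2*A^2*Ab^2*e + (-1)*Complex.I*w^2*zb^2*A^2*Ab^2*e^2*eb + (-1)*Complex.I*w^2*zb^2*A^3*Ab + (1)*Complex.I*w^2*zb^2*A^3*Ab*e*eb + (2)*Complex.I^2*z*zb^4*A^2*Ab*e + (-2)*Complex.I^2*z^2*zb^3*A*Ab^2*e + (4)*Complex.I^2*z^2*zb^3*A^2*Ab + (-4)*Complex.I^2*z^3*zb^2*A*Ab^2 + (2)*Complex.I^2*z^3*zb^2*A^2*Ab*eb + (-2)*Complex.I^2*z^4*zb*A*Ab^2*eb + (-1)*Complex.I^2*wb*z^2*zb^2*A*Ab^3*e + (-1)*Complex.I^2*wb*z^2*zb^2*A^2*Ab^2 + (2)*Complex.I^2*wb*z^2*zb^2*A^2*Ab^2*e*eb + (-2)*Complex.I^2*wb*z^3*zb*A*Ab^3 + (2)*Complex.I^2*wb*z^3*zb*A^2*Ab^2*eb + (-1)*Complex.I^2*wb*z^4*A*Ab^3*eb + (1)*Complex.I^2*wb*z^4*A^2*Ab^2*eb^2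 + (-1)*Complex.I^2*w*zb^4*A^2*Ab^2*e^2 + (1)*Complex.I^2*w*zb^4*A^3*Ab*e + (-2)*Complex.I^2*w*z*zb^3*A^2*Ab^2*e + (2)*Complex.I^2*w*z*zb^3*A^3*Ab + (1)*Complex.I^2*w*z^2*zb^2*A^2*Ab^2 + (-2)*Complex.I^2*w*z^2*zb^2*A^2*Ab^2*e*eb + (1)*Complex.I^2*w*z^2*zb^2*A^3*Ab*eb + (-1)*Complex.I^3*z^2*zb^4*A^2*Ab^2*e + (-2)*Complex.I^3*z^3*zb^3*A^2*Ab^2 + (-1)*Complex.I^3*z^4*zb^2*A^2*Ab^2*eb) * Complex.I_sq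

private lemma defeq_complex (z ζ w : ℂ) :
    ((1 - ‖ζ‖ ^ 2) * w.im
        = ‖z‖ ^ 2 + (z ^ 2 * (starRingEnd ℂ) ζ).re)
    ↔ (1 - ζ * (starRingEnd ℂ) ζ) * (w - (starRingEnd ℂ) w)
        = 2 * Complex.I * (z * (starRingEnd ℂ) z)
          + Complex.I * (z ^ 2 * (starRingEnd ℂ) ζ + ((starRingEnd ℂ) z) ^ 2 * ζ) := by
  simp only [Complex.sq_norm, Complex.normSq_apply]
  rw [Complex.ext_iff]
  simp only [pow_two, Complex.mul_re, Complex.mul_im,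
    Complex.sub_re, Complex.sub_im, Complex.add_re, Complex.add_im, Complex.one_re,
    Complex.one_im, Complex.I_re, Complex.I_im, Complex.conj_re, Complex.conj_im,
    Complex.re_ofNat, Complex.im_ofNat]
  constructor
  · intro h
    exact ⟨by ring, by linear_combination 2 * h⟩
  · rintro ⟨h1, h2⟩
    linear_combination h2 / 2
noncomputable def deltaAut (a : ℂ) (t : ℝ) (z ζ w : ℂ) : ℂ :=
  1 - 2 * Complex.I * (starRingEnd ℂ) a * z
    - ((t : ℂ) + Complex.I * (Complex.normSq a : ℂ)) * w
    + Complex.I * ((starRingEnd ℂ) a) ^ 2 * (w * ζ + Complex.I * z ^ 2)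

/-- First component `z̃` of the stability-group automorphism `ψ`. -/
noncomputable def psiZ (a : ℂ) (t : ℝ) (u : ℂ) (l : ℝ) (z ζ w : ℂ) : ℂ :=
  (l : ℂ) * u * (z + a * w - (starRingEnd ℂ) a * (w * ζ + Complex.I * z ^ 2)) /
    deltaAut a t z ζ w

/-- Second component `ζ̃` of the stability-group automorphism `ψ`. -/
noncomputable def psiZeta (a : ℂ) (t : ℝ) (u : ℂ) (l : ℝ) (z ζ w : ℂ) : ℂ :=
  u ^ 2 * (ζ - 2 * Complex.I * a * z - Complex.I * a ^ 2 * w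
      - ((t : ℂ) - Complex.I * (Complex.normSq a : ℂ)) * (w * ζ + Complex.I * z ^ 2)) /
    deltaAut a t z ζ w

/-- Third component `w̃` of the stability-group automorphism `ψ`. -/
noncomputable def psiW (a : ℂ) (t : ℝ) (u : ℂ) (l : ℝ) (z ζ w : ℂ) : ℂ :=
  (l : ℂ) ^ 2 * w / deltaAut a t z ζ w

set_option maxRecDepth 100000 in
set_option maxHeartbeats 4000000 in
/-- For `a ∈ ℂ`, `t ∈ ℝ`, `|u| = 1`, `λ > 0`, the map
`ψ = (psiZ, psiZeta, psiW)` fixes the origin, and whenever `δ ≠ 0` and `(z,ζ,w)`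
satisfies the defining equation `(1−|ζ|²)·Im w = |z|² + Re(z²·conj ζ)` of `𝒳`, so does
the image `(z̃,ζ̃,w̃)`.  (These `ψ` constitute the stability group `Aut(𝒳,0)`.) -/
theorem stability_group_of_X (a u : ℂ) (t l : ℝ)
    (hu : ‖u‖ = 1) (hl : 0 < l) :
    (psiZ a t u l 0 0 0 = 0 ∧ psiZeta a t u l 0 0 0 = 0 ∧ psiW a t u l 0 0 0 = 0) ∧
    (∀ z ζ w : ℂ, deltaAut a t z ζ w ≠ 0 →
      (1 - ‖ζ‖ ^ 2) * w.im
          = ‖z‖ ^ 2 + (z ^ 2 * (starRingEnd ℂ) ζ).re →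
      (1 - ‖psiZeta a t u l z ζ w‖ ^ 2) * (psiW a t u l z ζ w).im
        = ‖psiZ a t u l z ζ w‖ ^ 2
          + ((psiZ a t u l z ζ w) ^ 2 * (starRingEnd ℂ) (psiZeta a t u l z ζ w)).re) := by
  constructor
  · refine ⟨?_, ?_, ?_⟩ <;> simp [psiZ, psiZeta, psiW]
  · intro z ζ w hD0 hXeq
    have hun : u ≠ 0 := by intro h; rw [h] at hu; simp at hu
    have hu1 : u * (starRingEnd ℂ) u = 1 := by
      rw [Complex.mul_conj, Complex.normSq_eq_norm_sq, hu]; norm_num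
    have hcu : (starRingEnd ℂ) u = u⁻¹ := eq_inv_of_mul_eq_one_right hu1
    have hDb0 : (starRingEnd ℂ) (deltaAut a t z ζ w) ≠ 0 := fun h => hD0 (by
      have := congrArg (starRingEnd ℂ) h; simpa using this)
    have H := (defeq_complex z ζ w).mp hXeq
    have hDf : deltaAut a t z ζ w
        = 1 - 2*Complex.I*((starRingEnd ℂ) a)*z
          - ((t:ℂ) + Complex.I*(a*(starRingEnd ℂ) a))*w
          + Complex.I*((starRingEnd ℂ) a)^2*(w*ζ + Complex.I*z^2) := by
      unfold deltaAut; rw [Complex.mul_conj]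
    have hDbf : (starRingEnd ℂ) (deltaAut a t z ζ w)
        = 1 + 2*Complex.I*a*((starRingEnd ℂ) z)
          - ((t:ℂ) - Complex.I*(a*(starRingEnd ℂ) a))*((starRingEnd ℂ) w)
          - Complex.I*a^2*(((starRingEnd ℂ) w)*((starRingEnd ℂ) ζ)
              - Complex.I*((starRingEnd ℂ) z)^2) := by
      rw [Complex.mul_conj]
      unfold deltaAut
      simp only [map_sub, map_add, map_mul, map_one, map_pow, map_ofNat,
        Complex.conj_I, Complex.conj_conj, Complex.conj_ofReal]
      ring
    have hNzb : (starRingEnd ℂ) (z + a*w - (starRingEnd ℂ) a*(w*ζ + Complex.I*z^2))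
        = (starRingEnd ℂ) z + (starRingEnd ℂ) a * (starRingEnd ℂ) w
          - a*((starRingEnd ℂ) w * (starRingEnd ℂ) ζ - Complex.I*((starRingEnd ℂ) z)^2) := by
      simp only [map_sub, map_add, map_mul, map_one, map_pow, map_ofNat,
        Complex.conj_I, Complex.conj_conj, Complex.conj_ofReal]
      ring
    have hNe : (ζ - 2*Complex.I*a*z - Complex.I*a^2*w
          - ((t:ℂ) - Complex.I*(Complex.normSq a : ℂ))*(w*ζ + Complex.I*z^2))
        = ζ - 2*Complex.I*a*z - Complex.I*a^2*w
          - ((t:ℂ) - Complex.I*(a*(starRingEnd ℂ) a))*(w*ζ + Complex.I*z^2) := by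
      rw [Complex.mul_conj]
    have hNeb : (starRingEnd ℂ) (ζ - 2*Complex.I*a*z - Complex.I*a^2*w
          - ((t:ℂ) - Complex.I*(Complex.normSq a : ℂ))*(w*ζ + Complex.I*z^2))
        = (starRingEnd ℂ) ζ + 2*Complex.I*((starRingEnd ℂ) a)*((starRingEnd ℂ) z)
          + Complex.I*((starRingEnd ℂ) a)^2*((starRingEnd ℂ) w)
          - ((t:ℂ) + Complex.I*(a*(starRingEnd ℂ) a))
              * (((starRingEnd ℂ) w)*((starRingEnd ℂ) ζ) - Complex.I*((starRingEnd ℂ) z)^2) := by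
      rw [Complex.mul_conj]
      simp only [map_sub, map_add, map_mul, map_one, map_pow, map_ofNat,
        Complex.conj_I, Complex.conj_conj, Complex.conj_ofReal]
      ring
    have M := main_ident z ((starRingEnd ℂ) z) ζ ((starRingEnd ℂ) ζ) w ((starRingEnd ℂ) w)
      a ((starRingEnd ℂ) a) (t:ℂ)
      (deltaAut a t z ζ w) ((starRingEnd ℂ) (deltaAut a t z ζ w))
      (z + a*w - (starRingEnd ℂ) a*(w*ζ + Complex.I*z^2))
      ((starRingEnd ℂ) (z + a*w - (starRingEnd ℂ) a*(w*ζ + Complex.I*z^2)))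
      (ζ - 2*Complex.I*a*z - Complex.I*a^2*w
        - ((t:ℂ) - Complex.I*(Complex.normSq a : ℂ))*(w*ζ + Complex.I*z^2))
      ((starRingEnd ℂ) (ζ - 2*Complex.I*a*z - Complex.I*a^2*w
        - ((t:ℂ) - Complex.I*(Complex.normSq a : ℂ))*(w*ζ + Complex.I*z^2)))
      hDf hDbf rfl hNzb hNe hNeb H
    rw [defeq_complex]
    simp only [psiZ, psiZeta, psiW, map_div₀, map_mul, map_pow, Complex.conj_ofReal, hcu]
    generalize hG1 : deltaAut a t z ζ w = D at hD0 hDb0 M ⊢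
    generalize hG2 : (starRingEnd ℂ) D = Db at hDb0 M ⊢
    generalize hG3 : z + a * w - (starRingEnd ℂ) a * (w * ζ + Complex.I * z ^ 2) = Nz at M ⊢
    generalize hG4 : (starRingEnd ℂ) Nz = Nzb at M ⊢
    generalize hG5 : ζ - 2 * Complex.I * a * z - Complex.I * a ^ 2 * w
        - ((t:ℂ) - Complex.I * (Complex.normSq a : ℂ)) * (w * ζ + Complex.I * z ^ 2) = Ne at M ⊢
    generalize hG6 : (starRingEnd ℂ) Ne = Neb at M ⊢
    generalize hG7 : (starRingEnd ℂ) w = wb at M ⊢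
    field_simp [hD0, hDb0, hun]
    linear_combination (l:ℂ)^2 * M
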